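/- Let n ≥ 1 and let g : ℝ → ℝ be continuous on [0,∞), differentiable on (0,∞), with g(s) > 0 for all s ≥ 0, such that the derivative of s ↦ s·g(s) is strictly positive on (0,∞) and s·g(s) → ∞ as s → ∞. Then there exists a function k : ℝ → ℝ, differentiable on (0,∞), such that k(s) > 0 and k(s) + 2s·k'(s) > 0 for all s > 0, and such that for every nonzero vector b ∈ ℝⁿ (with the Euclidean norm) the vector u := k(‖b‖²)·b satisfies g(‖u‖)·u = b. -/

import Mathlib

/-- Forchheimer's law induces a generalized Darcy law: there is a permeability
function `k` with `k(s) > 0` and `k(s) + 2 s k'(s) > 0` such that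
`u = k(‖b‖²) b` solves `g(‖u‖) u = b` for every `b ≠ 0`. -/
theorem forchheimer_to_darcy (n : ℕ) (hn : 1 ≤ n) (g : ℝ → ℝ)
    (hg_cont : ContinuousOn g (Set.Ici (0 : ℝ)))
    (hg_diff : ∀ s ∈ Set.Ioi (0 : ℝ), DifferentiableAt ℝ g s)
    (hg_pos : ∀ s ∈ Set.Ici (0 : ℝ), 0 < g s)
    (hderiv_pos : ∀ s ∈ Set.Ioi (0 : ℝ), 0 < deriv (fun t => t * g t) s)
    (htop : Filter.Tendsto (fun s => s * g s) Filter.atTop Filter.atTop) :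
    ∃ k : ℝ → ℝ,
      (∀ s ∈ Set.Ioi (0 : ℝ), DifferentiableAt ℝ k s) ∧
      (∀ s ∈ Set.Ioi (0 : ℝ), 0 < k s ∧ 0 < k s + 2 * s * deriv k s) ∧
      (∀ b : EuclideanSpace ℝ (Fin n), b ≠ 0 →
        g ‖k (‖b‖ ^ 2) • b‖ • (k (‖b‖ ^ 2) • b) = b) := by
  classical
  set G : ℝ → ℝ := fun t => t * g t with hGdef
  have hG0 : G 0 = 0 := by simp [hGdef]
  have hGcont : ContinuousOn G (Set.Ici 0) := continuousOn_id.mul hg_cont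
  have hGmono : StrictMonoOn G (Set.Ici 0) := by
    apply strictMonoOn_of_deriv_pos (convex_Ici 0) hGcont
    intro x hx
    rw [interior_Ici] at hx
    exact hderiv_pos x hx
  -- surjectivity onto [0,∞)
  have hex : ∀ r : ℝ, ∃ x, 0 ≤ x ∧ (0 ≤ r → G x = r) := by
    intro r
    by_cases hr : 0 ≤ r
    · obtain ⟨M, hM1, hM2⟩ := ((htop.eventually_ge_atTop r).and
        (Filter.eventually_ge_atTop (0 : ℝ))).exists
      have hsub : Set.Icc (0 : ℝ) M ⊆ Set.Ici 0 := Set.Icc_subset_Ici_self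
      have := intermediate_value_Icc hM2 (hGcont.mono hsub)
      have hrmem : r ∈ Set.Icc (G 0) (G M) := by
        constructor
        · rw [hG0]; exact hr
        · exact hM1
      obtain ⟨x, hx, hGx⟩ := this hrmem
      exact ⟨x, hx.1, fun _ => hGx⟩
    · exact ⟨0, le_refl 0, fun h => absurd h hr⟩
  choose F hF0 hGF using hex
  have hFpos : ∀ r : ℝ, 0 < r → 0 < F r := by
    intro r hr
    rcases (hF0 r).lt_or_eq with h | h
    · exact h
    · exfalso
      have := hGF r hr.le
      rw [← h, hG0] at this
      exact hr.ne this
  -- continuity of F at positive points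
  have hFcont : ∀ r : ℝ, 0 < r → ContinuousAt F r := by
    intro r hr
    have hx : 0 < F r := hFpos r hr
    rw [Metric.continuousAt_iff]
    intro ε hε
    set ε' : ℝ := min (ε / 2) (F r / 2) with hε'def
    have hε'pos : 0 < ε' := lt_min (by linarith) (by linarith)
    have hε'lt : ε' < F r := lt_of_le_of_lt (min_le_right _ _) (by linarith)
    have ha : (0:ℝ) ≤ F r - ε' := by linarith
    have hb : (0:ℝ) ≤ F r + ε' := by linarith
    have h1 : G (F r - ε') < r := by
      have := hGmono ha (hF0 r) (by linarith)
      rwa [hGF r hr.le] at this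
    have h2 : r < G (F r + ε') := by
      have := hGmono (hF0 r) hb (by linarith)
      rwa [hGF r hr.le] at this
    refine ⟨min (r - G (F r - ε')) (G (F r + ε') - r), lt_min (by linarith) (by linarith), ?_⟩
    intro y hy
    rw [Real.dist_eq] at hy ⊢
    have hy1 : G (F r - ε') < y := by
      have := abs_lt.1 (lt_of_lt_of_le hy (min_le_left _ _))
      linarith [this.1]
    have hy2 : y < G (F r + ε') := by
      have := abs_lt.1 (lt_of_lt_of_le hy (min_le_right _ _))
      linarith [this.2]
    have hynn : 0 ≤ y := by
      have : (0:ℝ) ≤ G (F r - ε') := by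
        rcases ha.lt_or_eq with h | h
        · have := hGmono Set.self_mem_Ici ha h
          rw [hG0] at this; exact this.le
        · rw [← h, hG0]
      linarith
    have hGFy : G (F y) = y := hGF y hynn
    have hlt1 : F r - ε' < F y := by
      have := (hGmono.lt_iff_lt ha (hF0 y)).1 (by rw [hGFy]; exact hy1)
      exact this
    have hlt2 : F y < F r + ε' := by
      exact (hGmono.lt_iff_lt (hF0 y) hb).1 (by rw [hGFy]; exact hy2)
    rw [abs_lt]
    have : ε' ≤ ε / 2 := min_le_left _ _
    constructor <;> linarith
  -- derivative of F
  have hFderiv : ∀ r : ℝ, 0 < r → HasDerivAt F (deriv G (F r))⁻¹ r := by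
    intro r hr
    have hx : 0 < F r := hFpos r hr
    have hGdiff : DifferentiableAt ℝ G (F r) :=
      differentiableAt_id.mul (hg_diff _ hx)
    refine HasDerivAt.of_local_left_inverse (hFcont r hr) hGdiff.hasDerivAt
      (ne_of_gt (hderiv_pos _ hx)) ?_
    filter_upwards [eventually_gt_nhds hr] with y hy
    exact hGF y hy.le
  -- define k
  set k : ℝ → ℝ := fun s => F (Real.sqrt s) / Real.sqrt s with hkdef
  have hkval : ∀ s : ℝ, 0 < s → k s = F (Real.sqrt s) / Real.sqrt s := fun _ _ => rfl
  have hkderiv : ∀ s : ℝ, 0 < s →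
      HasDerivAt k (((deriv G (F (Real.sqrt s)))⁻¹ * (1 / (2 * Real.sqrt s)) * Real.sqrt s
        - F (Real.sqrt s) * (1 / (2 * Real.sqrt s))) / (Real.sqrt s) ^ 2) s := by
    intro s hs
    have hr : 0 < Real.sqrt s := Real.sqrt_pos.2 hs
    have hsqrt : HasDerivAt Real.sqrt (1 / (2 * Real.sqrt s)) s :=
      Real.hasDerivAt_sqrt hs.ne'
    have hcomp : HasDerivAt (fun t => F (Real.sqrt t))
        ((deriv G (F (Real.sqrt s)))⁻¹ * (1 / (2 * Real.sqrt s))) s :=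
      (hFderiv _ hr).comp s hsqrt
    exact hcomp.div hsqrt hr.ne'
  refine ⟨k, ?_, ?_, ?_⟩
  · intro s hs
    exact (hkderiv s hs).differentiableAt
  · intro s hs
    have hs : 0 < s := hs
    have hr : 0 < Real.sqrt s := Real.sqrt_pos.2 hs
    have hFr : 0 < F (Real.sqrt s) := hFpos _ hr
    have hkpos : 0 < k s := div_pos hFr hr
    refine ⟨hkpos, ?_⟩
    have hd := (hkderiv s hs).deriv
    rw [hd]
    have hdG : 0 < deriv G (F (Real.sqrt s)) := hderiv_pos _ hFr
    have hsq : Real.sqrt s ^ 2 = s := Real.sq_sqrt hs.le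
    have key : k s + 2 * s * (((deriv G (F (Real.sqrt s)))⁻¹ * (1 / (2 * Real.sqrt s)) * Real.sqrt s
        - F (Real.sqrt s) * (1 / (2 * Real.sqrt s))) / (Real.sqrt s) ^ 2)
        = (deriv G (F (Real.sqrt s)))⁻¹ := by
      rw [hkval s hs, ← hsq]
      field_simp
      rw [Real.sqrt_sq hr.le]
      ring
    rw [key]
    exact inv_pos.2 hdG
  · intro b hb
    have hr : 0 < ‖b‖ := norm_pos_iff.2 hb
    have hsqrt : Real.sqrt (‖b‖ ^ 2) = ‖b‖ := Real.sqrt_sq (norm_nonneg b)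
    have hkv : k (‖b‖ ^ 2) = F ‖b‖ / ‖b‖ := by rw [hkval _ (by positivity), hsqrt]
    have hFr : 0 < F ‖b‖ := hFpos _ hr
    have hknn : 0 ≤ k (‖b‖ ^ 2) := by rw [hkv]; positivity
    have hnorm : ‖k (‖b‖ ^ 2) • b‖ = F ‖b‖ := by
      rw [norm_smul, Real.norm_eq_abs, abs_of_nonneg hknn, hkv]
      field_simp
    rw [hnorm, smul_smul]
    have : g (F ‖b‖) * k (‖b‖ ^ 2) = 1 := by
      rw [hkv]
      have hGF' : F ‖b‖ * g (F ‖b‖) = ‖b‖ := hGF _ hr.le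
      field_simp
      linarith [hGF', mul_comm (g (F ‖b‖)) (F ‖b‖)]
    rw [this, one_smul]
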